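/- arXiv:1006.3502 — 3 statements merged into one kernel-verified Lean document; each statement's English description precedes it below -/
import Mathlib

section
/- For ρ = Σ_{i=1}^d p_i |i, σ(i)⟩⟨i, σ(i)| on C^d ⊗ C^d, where σ is a permutation of {1,...,d} and p_i ≥ 0, Σ p_i = 1, the fully entangled fraction is F(ρ) = 1/d. -/
open Matrix Complex BigOperators Finset

noncomputable section

def psiPlus (d : ℕ) : (Fin d × Fin d) → ℂ :=
  fun p => if p.1 = p.2 then ((1 / Real.sqrt d : ℝ) : ℂ) else 0

def tensorI {d : ℕ} (U : Matrix (Fin d) (Fin d) ℂ) :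
    Matrix (Fin d × Fin d) (Fin d × Fin d) ℂ :=
  fun p q => U p.1 q.1 * (if p.2 = q.2 then 1 else 0)

def outer {n : Type*} [Fintype n] (ψ : n → ℂ) : Matrix n n ℂ :=
  Matrix.vecMulVec ψ (star ψ)

def fef (d : ℕ) (ρ : Matrix (Fin d × Fin d) (Fin d × Fin d) ℂ) : ℝ :=
  sSup { x : ℝ | ∃ U ∈ Matrix.unitaryGroup (Fin d) ℂ,
    x = (star (tensorI U *ᵥ psiPlus d) ⬝ᵥ (ρ *ᵥ (tensorI U *ᵥ psiPlus d))).re }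

lemma hv_eq (d : ℕ) (U : Matrix (Fin d) (Fin d) ℂ) (q : Fin d × Fin d) :
    (tensorI U *ᵥ psiPlus d) q = U q.1 q.2 * ((1 / Real.sqrt d : ℝ) : ℂ) := by
  simp [tensorI, psiPlus, mulVec, dotProduct, Fintype.sum_prod_type, mul_ite, ite_mul,
    mul_zero, zero_mul]

lemma val_eq (d : ℕ) (hd : 0 < d) (σ : Equiv.Perm (Fin d)) (p : Fin d → ℝ)
    (U : Matrix (Fin d) (Fin d) ℂ) :
    (star (tensorI U *ᵥ psiPlus d) ⬝ᵥ
      ((∑ i, p i • outer (fun q : Fin d × Fin d => if q = (i, σ i) then (1 : ℂ) else 0)) *ᵥ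
        (tensorI U *ᵥ psiPlus d))).re
    = (∑ i, p i * Complex.normSq (U i (σ i))) / d := by
  set v := tensorI U *ᵥ psiPlus d with hv
  have key : star v ⬝ᵥ
      ((∑ i, p i • outer (fun q : Fin d × Fin d => if q = (i, σ i) then (1 : ℂ) else 0)) *ᵥ v)
      = ∑ i, (p i : ℂ) * Complex.normSq (v (i, σ i)) := by
    rw [show (∑ i, p i • outer (fun q : Fin d × Fin d => if q = (i, σ i) then (1 : ℂ) else 0)) *ᵥ v
        = ∑ i, (p i • outer (fun q : Fin d × Fin d => if q = (i, σ i) then (1 : ℂ) else 0)) *ᵥ v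
      from map_sum (Matrix.mulVec.addMonoidHomLeft v) _ _]
    rw [show star v ⬝ᵥ (∑ i, (p i • outer (fun q : Fin d × Fin d => if q = (i, σ i) then (1 : ℂ) else 0)) *ᵥ v)
        = ∑ i, star v ⬝ᵥ ((p i • outer (fun q : Fin d × Fin d => if q = (i, σ i) then (1 : ℂ) else 0)) *ᵥ v) by
      simp only [dotProduct, Finset.sum_apply, Finset.mul_sum]; exact Finset.sum_comm]
    refine Finset.sum_congr rfl fun i _ => ?_
    have : (p i • outer (fun q : Fin d × Fin d => if q = (i, σ i) then (1 : ℂ) else 0)) *ᵥ v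
        = p i • (outer (fun q : Fin d × Fin d => if q = (i, σ i) then (1 : ℂ) else 0) *ᵥ v) := by
      rw [smul_mulVec]
    rw [this, dotProduct_smul]
    have houter : star v ⬝ᵥ (outer (fun q : Fin d × Fin d => if q = (i, σ i) then (1 : ℂ) else 0) *ᵥ v)
        = (starRingEnd ℂ) (v (i, σ i)) * v (i, σ i) := by
      simp [outer, dotProduct, mulVec, vecMulVec_apply, Pi.star_apply, Finset.mul_sum,
        Finset.sum_mul, mul_ite, ite_mul, mul_zero, zero_mul, mul_comm, mul_left_comm]
    rw [houter]
    rw [Complex.real_smul, mul_comm ((starRingEnd ℂ) (v (i, σ i))), Complex.mul_conj]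
  rw [key]
  have hnv : ∀ i : Fin d, Complex.normSq (v (i, σ i)) = Complex.normSq (U i (σ i)) / d := by
    intro i
    rw [hv, hv_eq]
    rw [Complex.normSq_mul]
    have : Complex.normSq ((1 / Real.sqrt d : ℝ) : ℂ) = 1 / d := by
      rw [Complex.normSq_ofReal]
      rw [div_mul_div_comm, one_mul, Real.mul_self_sqrt (Nat.cast_nonneg d)]
    rw [this]
    ring
  push_cast
  rw [Complex.re_sum]
  rw [Finset.sum_div]
  refine Finset.sum_congr rfl fun i _ => ?_
  rw [hnv i]
  push_cast
  ring_nf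
  simp

lemma row_normSq (d : ℕ) (U : Matrix (Fin d) (Fin d) ℂ)
    (hU : U ∈ Matrix.unitaryGroup (Fin d) ℂ) (i : Fin d) :
    ∑ j, Complex.normSq (U i j) = 1 := by
  have h := Matrix.mem_unitaryGroup_iff.mp hU
  have h1 := congrArg (fun M : Matrix (Fin d) (Fin d) ℂ => M i i) h
  simp only [Matrix.mul_apply, Matrix.one_apply_eq, Matrix.star_apply] at h1
  have h2 : (∑ j, (Complex.normSq (U i j) : ℂ)) = 1 := by
    rw [← h1]
    exact Finset.sum_congr rfl fun j _ => by rw [← Complex.mul_conj]; rfl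
  exact_mod_cast h2

lemma normSq_entry_le_one (d : ℕ) (U : Matrix (Fin d) (Fin d) ℂ)
    (hU : U ∈ Matrix.unitaryGroup (Fin d) ℂ) (i j : Fin d) :
    Complex.normSq (U i j) ≤ 1 := by
  rw [← row_normSq d U hU i]
  exact Finset.single_le_sum (fun k _ => Complex.normSq_nonneg _) (Finset.mem_univ j)

/-- For `ρ = ∑ᵢ pᵢ |i, σ(i)⟩⟨i, σ(i)|` with `σ` a permutation, `F(ρ) = 1/d`. -/
theorem fef_permutation_diagonal (d : ℕ) (hd : 0 < d) (σ : Equiv.Perm (Fin d))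
    (p : Fin d → ℝ) (hp : ∀ i, 0 ≤ p i) (hp1 : ∑ i, p i = 1) :
    fef d (∑ i, p i • outer (fun q : Fin d × Fin d =>
      if q = (i, σ i) then (1 : ℂ) else 0)) = 1 / d := by
  have hdR : (0 : ℝ) < d := by exact_mod_cast hd
  set U₀ : Matrix (Fin d) (Fin d) ℂ := fun a b => if b = σ a then 1 else 0 with hU₀def
  have hU₀ : U₀ ∈ Matrix.unitaryGroup (Fin d) ℂ := by
    rw [Matrix.mem_unitaryGroup_iff']
    ext a b
    simp only [Matrix.mul_apply, Matrix.star_apply]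
    simp only [Matrix.mul_apply, Matrix.star_apply, hU₀def, apply_ite (star : ℂ → ℂ), star_one, star_zero,
      Matrix.one_apply]
    rw [← Equiv.sum_comp σ.symm
      (fun k => (if a = σ k then (1:ℂ) else 0) * (if b = σ k then 1 else 0))]
    simp [eq_comm]
  have hbound : ∀ x ∈ { x : ℝ | ∃ U ∈ Matrix.unitaryGroup (Fin d) ℂ,
      x = (star (tensorI U *ᵥ psiPlus d) ⬝ᵥ
        ((∑ i, p i • outer (fun q : Fin d × Fin d => if q = (i, σ i) then (1 : ℂ) else 0)) *ᵥ
          (tensorI U *ᵥ psiPlus d))).re }, x ≤ 1 / d := by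
    rintro x ⟨U, hU, rfl⟩
    rw [val_eq d hd σ p U]
    have : ∑ i, p i * Complex.normSq (U i (σ i)) ≤ 1 := by
      rw [← hp1]
      refine Finset.sum_le_sum fun i _ => ?_
      calc p i * Complex.normSq (U i (σ i)) ≤ p i * 1 :=
            mul_le_mul_of_nonneg_left (normSq_entry_le_one d U hU i (σ i)) (hp i)
        _ = p i := mul_one _
    exact div_le_div_of_nonneg_right this hdR.le
  have hmem : (1 / d : ℝ) ∈ { x : ℝ | ∃ U ∈ Matrix.unitaryGroup (Fin d) ℂ,
      x = (star (tensorI U *ᵥ psiPlus d) ⬝ᵥ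
        ((∑ i, p i • outer (fun q : Fin d × Fin d => if q = (i, σ i) then (1 : ℂ) else 0)) *ᵥ
          (tensorI U *ᵥ psiPlus d))).re } := by
    refine ⟨U₀, hU₀, ?_⟩
    rw [val_eq d hd σ p U₀]
    have : ∀ i : Fin d, U₀ i (σ i) = 1 := fun i => by simp [hU₀def]
    simp only [this, Complex.normSq_one, mul_one, hp1]
  refine le_antisymm (csSup_le ⟨1/d, hmem⟩ hbound) (le_csSup ⟨1/d, hbound⟩ hmem)

end
end

section
/- If ρ is a separable mixed state on C^d ⊗ C^d, then its fully entangled fraction satisfies F(ρ) ≤ 1/d. -/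
open Matrix Complex BigOperators Finset

noncomputable section

-- aux: psi formula
lemma psi_formula {d : ℕ} (U : Matrix (Fin d) (Fin d) ℂ) (q : Fin d × Fin d) :
    (tensorI U *ᵥ psiPlus d) q = ((1 / Real.sqrt d : ℝ) : ℂ) * U q.1 q.2 := by
  simp [tensorI, psiPlus, mulVec, dotProduct, Fintype.sum_prod_type, mul_ite, ite_mul,
    mul_comm]

lemma sum_mulVec' {m n ι : Type*} [Fintype n] (s : Finset ι)
    (M : ι → Matrix m n ℂ) (v : n → ℂ) :
    (∑ i ∈ s, M i) *ᵥ v = ∑ i ∈ s, M i *ᵥ v := by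
  ext q
  simp only [mulVec, dotProduct, Matrix.sum_apply, Finset.sum_apply, Finset.sum_mul]
  rw [Finset.sum_comm]

lemma dot_sum' {n ι : Type*} [Fintype n] (s : Finset ι) (u : n → ℂ) (f : ι → n → ℂ) :
    u ⬝ᵥ (∑ i ∈ s, f i) = ∑ i ∈ s, u ⬝ᵥ f i := by
  simp only [dotProduct, Finset.sum_apply, Finset.mul_sum]
  rw [Finset.sum_comm]

lemma dot_self_re {n : Type*} [Fintype n] (v : n → ℂ) :
    (star v ⬝ᵥ v).re = ∑ k, ‖v k‖ ^ 2 := by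
  simp [dotProduct, Complex.re_sum, Complex.mul_re,
    Complex.sq_norm, Complex.normSq_apply]

lemma outer_quad {n : Type*} [Fintype n] (v ψ : n → ℂ) :
    star ψ ⬝ᵥ (outer v *ᵥ ψ) = (star ψ ⬝ᵥ v) * (star v ⬝ᵥ ψ) := by
  simp only [outer, vecMulVec, dotProduct, mulVec, Matrix.of_apply, Pi.star_apply,
    Finset.mul_sum, Finset.sum_mul]
  rw [Finset.sum_comm]
  exact Finset.sum_congr rfl fun i _ => Finset.sum_congr rfl fun j _ => by ring

lemma unitary_norm {d : ℕ} (U : Matrix (Fin d) (Fin d) ℂ)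
    (hU : U ∈ Matrix.unitaryGroup (Fin d) ℂ) (a : Fin d → ℂ) :
    star (Uᴴ *ᵥ a) ⬝ᵥ (Uᴴ *ᵥ a) = star a ⬝ᵥ a := by
  have h1 : U * Uᴴ = 1 := by
    simpa [Matrix.star_eq_conjTranspose] using Matrix.mem_unitaryGroup_iff.mp hU
  rw [star_mulVec, conjTranspose_conjTranspose, dotProduct_mulVec, vecMul_vecMul, h1, vecMul_one]

/-- A separable state has FEF at most `1/d`. -/
theorem fef_separable_le (d : ℕ) (hd : 0 < d)
    (ρ : Matrix (Fin d × Fin d) (Fin d × Fin d) ℂ)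
    (hsep : ∃ (n : ℕ) (p : Fin n → ℝ) (a b : Fin n → (Fin d → ℂ)),
      (∀ i, 0 ≤ p i) ∧ (∑ i, p i = 1) ∧
      (∀ i, ∑ k, ‖a i k‖ ^ 2 = 1) ∧ (∀ i, ∑ k, ‖b i k‖ ^ 2 = 1) ∧
      ρ = ∑ i, p i • outer (fun q : Fin d × Fin d => a i q.1 * b i q.2)) :
    fef d ρ ≤ 1 / d := by
  obtain ⟨n, p, a, b, hp, hpsum, ha, hb, hrho⟩ := hsep
  apply Real.sSup_le
  · rintro x ⟨U, hU, rfl⟩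
    set ψ := tensorI U *ᵥ psiPlus d with hψ
    -- key per-i bound
    have key : ∀ i, (star ψ ⬝ᵥ (outer (fun q : Fin d × Fin d => a i q.1 * b i q.2) *ᵥ ψ)).re
        ≤ 1 / d := by
      intro i
      rw [outer_quad]
      set c : ℂ := star ψ ⬝ᵥ (fun q : Fin d × Fin d => a i q.1 * b i q.2) with hc
      have hconj : star (fun q : Fin d × Fin d => a i q.1 * b i q.2) ⬝ᵥ ψ = starRingEnd ℂ c := by
        simp [hc, dotProduct, map_sum, mul_comm]
      rw [hconj, Complex.mul_conj']
      -- express c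
      set w : Fin d → ℂ := Uᴴ *ᵥ a i with hw
      have hcval : c = ((1 / Real.sqrt d : ℝ) : ℂ) * ∑ k, w k * b i k := by
        simp only [hc, hψ, dotProduct, Pi.star_apply, psi_formula]
        rw [Fintype.sum_prod_type, Finset.sum_comm, Finset.mul_sum]
        refine Finset.sum_congr rfl fun k _ => ?_
        simp only [hw, mulVec, dotProduct, conjTranspose_apply, Finset.sum_mul,
          Finset.mul_sum, star_mul']
        refine Finset.sum_congr rfl fun j _ => ?_
        simp only [RCLike.star_def, Complex.conj_ofReal]
        ring
      rw [← Complex.ofReal_pow, Complex.ofReal_re, hcval, norm_mul]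
      have hr : ‖((1 / Real.sqrt d : ℝ) : ℂ)‖ = 1 / Real.sqrt d := by
        rw [Complex.norm_real, Real.norm_eq_abs, _root_.abs_of_nonneg (by positivity)]
      have hw2 : ∑ k, ‖w k‖ ^ 2 = 1 := by
        have h1 := congrArg Complex.re (unitary_norm U hU (a i))
        rw [dot_self_re, dot_self_re] at h1
        rw [hw, h1, ha i]
      have hs : ‖∑ k, w k * b i k‖ ^ 2 ≤ 1 := by
        have h1 : ‖∑ k, w k * b i k‖ ≤ ∑ k, ‖w k‖ * ‖b i k‖ := by
          refine (norm_sum_le _ _).trans (le_of_eq ?_)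
          simp [norm_mul]
        have h2 := Finset.sum_mul_sq_le_sq_mul_sq Finset.univ
          (fun k => ‖w k‖) (fun k => ‖b i k‖)
        calc ‖∑ k, w k * b i k‖ ^ 2 ≤ (∑ k, ‖w k‖ * ‖b i k‖) ^ 2 := by
              exact pow_le_pow_left₀ (norm_nonneg _) h1 2
          _ ≤ (∑ k, ‖w k‖ ^ 2) * (∑ k, ‖b i k‖ ^ 2) := h2
          _ = 1 := by rw [hw2, hb i, one_mul]
      rw [hr, mul_pow]
      have hd' : (0:ℝ) < (d:ℝ) := by exact_mod_cast hd
      have hsq : (1 / Real.sqrt d) ^ 2 = 1 / d := by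
        rw [div_pow, one_pow, Real.sq_sqrt hd'.le]
      rw [hsq]
      calc 1 / (d:ℝ) * ‖∑ k, w k * b i k‖ ^ 2 ≤ 1 / d * 1 :=
            mul_le_mul_of_nonneg_left hs (by positivity)
        _ = 1 / d := mul_one _
    have hx : (star ψ ⬝ᵥ (ρ *ᵥ ψ)).re
        = ∑ i, p i * (star ψ ⬝ᵥ (outer (fun q : Fin d × Fin d => a i q.1 * b i q.2) *ᵥ ψ)).re := by
      rw [hrho, sum_mulVec', dot_sum', Complex.re_sum]
      refine Finset.sum_congr rfl fun i _ => ?_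
      rw [Matrix.smul_mulVec, dotProduct_smul, Complex.real_smul]
      simp [Complex.mul_re]
    rw [hx]
    calc ∑ i, p i * (star ψ ⬝ᵥ (outer (fun q : Fin d × Fin d => a i q.1 * b i q.2) *ᵥ ψ)).re
        ≤ ∑ i, p i * (1 / d) :=
          Finset.sum_le_sum fun i _ => mul_le_mul_of_nonneg_left (key i) (hp i)
      _ = 1 / d := by rw [← Finset.sum_mul, hpsum, one_mul]
  · positivity
end
end

section
/- The FEF of the Werner state ρ_wer(f) = ((d−f)/(d³−d)) I + ((df−1)/(d³−d)) V on C^d ⊗ C^d with d even equals (f+1)/(d(d+1)) for 1/d ≤ f ≤ 1, and (1−f)/(d(d−1)) for −1 ≤ f < 1/d. -/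
open Matrix Complex BigOperators Finset

noncomputable section

/-- The swap operator `V = ∑_{ij} |ij⟩⟨ji|`. -/
def swapOp (d : ℕ) : Matrix (Fin d × Fin d) (Fin d × Fin d) ℂ :=
  fun p q => if p.1 = q.2 ∧ p.2 = q.1 then 1 else 0

/-- The Werner state on `ℂ^d ⊗ ℂ^d`. -/
def werner (d : ℕ) (f : ℝ) : Matrix (Fin d × Fin d) (Fin d × Fin d) ℂ :=
  (((d : ℝ) - f) / ((d : ℝ) ^ 3 - d)) •
      (1 : Matrix (Fin d × Fin d) (Fin d × Fin d) ℂ) +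
    (((d : ℝ) * f - 1) / ((d : ℝ) ^ 3 - d)) • swapOp d

/-! ### Auxiliary material -/

lemma vec_apply {d : ℕ} (U : Matrix (Fin d) (Fin d) ℂ) (p : Fin d × Fin d) :
    (tensorI U *ᵥ psiPlus d) p = U p.1 p.2 * ((1 / Real.sqrt d : ℝ) : ℂ) := by
  simp only [Matrix.mulVec, dotProduct, tensorI, psiPlus]
  rw [Fintype.sum_prod_type]
  simp only [mul_ite, mul_one, mul_zero, ite_mul, zero_mul]
  rw [Finset.sum_comm]
  simp [Finset.sum_ite_eq']

lemma value_eq {d : ℕ} (hd : 0 < d) (f : ℝ) (U : Matrix (Fin d) (Fin d) ℂ)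
    (hU : U ∈ Matrix.unitaryGroup (Fin d) ℂ) :
    (star (tensorI U *ᵥ psiPlus d) ⬝ᵥ (werner d f *ᵥ (tensorI U *ᵥ psiPlus d))).re
    = ((d : ℝ) - f) / ((d : ℝ) ^ 3 - d)
      + (((d : ℝ) * f - 1) / ((d : ℝ) ^ 3 - d)) * ((1 : ℝ) / d)
        * (∑ i : Fin d, ∑ j : Fin d, (starRingEnd ℂ) (U i j) * U j i).re := by
  set c : ℂ := ((1 / Real.sqrt d : ℝ) : ℂ) with hc
  set a : ℝ := ((d : ℝ) - f) / ((d : ℝ) ^ 3 - d) with ha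
  set b : ℝ := (((d : ℝ) * f - 1) / ((d : ℝ) ^ 3 - d)) with hb
  set T : ℂ := ∑ i : Fin d, ∑ j : Fin d, (starRingEnd ℂ) (U i j) * U j i with hT
  have hcc : c * c = ((1 : ℝ) / d : ℝ) := by
    rw [hc, ← Complex.ofReal_mul]
    congr 1
    rw [div_mul_div_comm, one_mul, Real.mul_self_sqrt (by positivity)]
  have hUU : ∑ i : Fin d, ∑ j : Fin d, (starRingEnd ℂ) (U i j) * U i j = (d : ℂ) := by
    have h1 : star U * U = 1 := Matrix.mem_unitaryGroup_iff'.mp hU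
    have h2 := congrArg Matrix.trace h1
    rw [Matrix.trace_one] at h2
    simp only [Matrix.trace, Matrix.diag, Matrix.mul_apply, Matrix.star_apply] at h2
    rw [Finset.sum_comm]
    simpa using h2
  have hswap : ∀ p : Fin d × Fin d,
      (swapOp d *ᵥ (tensorI U *ᵥ psiPlus d)) p = U p.2 p.1 * c := by
    intro p
    simp only [Matrix.mulVec, dotProduct, swapOp, ite_mul, one_mul, zero_mul]
    rw [Finset.sum_congr rfl (fun q _ => if_congr
      (show (p.1 = q.2 ∧ p.2 = q.1) ↔ q = (p.2, p.1) by
        cases q; simp [Prod.ext_iff]; tauto) rfl rfl)]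
    rw [Finset.sum_ite_eq' Finset.univ (p.2, p.1), if_pos (Finset.mem_univ _)]
    exact vec_apply U (p.2, p.1)
  have hw : ∀ p : Fin d × Fin d, (werner d f *ᵥ (tensorI U *ᵥ psiPlus d)) p
      = ((a : ℝ) : ℂ) * (U p.1 p.2 * c) + ((b : ℝ) : ℂ) * (U p.2 p.1 * c) := by
    intro p
    rw [werner, Matrix.add_mulVec, Matrix.smul_mulVec, Matrix.smul_mulVec,
      Matrix.one_mulVec]
    simp only [Pi.add_apply, Pi.smul_apply, hswap, vec_apply, Complex.real_smul, ← hc, ← ha, ← hb]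
  have key : (star (tensorI U *ᵥ psiPlus d) ⬝ᵥ (werner d f *ᵥ (tensorI U *ᵥ psiPlus d)))
      = ((a : ℝ) : ℂ) + (((b * (1 / d)) : ℝ) : ℂ) * T := by
    simp only [dotProduct, Pi.star_apply, hw, vec_apply, ← hc]
    have conj_c : (starRingEnd ℂ) c = c := Complex.conj_ofReal _
    rw [Fintype.sum_prod_type]
    have expand : ∀ i j : Fin d,
        star (U i j * c) * (((a : ℝ) : ℂ) * (U i j * c) + ((b : ℝ) : ℂ) * (U j i * c))
        = ((a : ℝ) : ℂ) * (c * c) * ((starRingEnd ℂ) (U i j) * U i j)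
          + ((b : ℝ) : ℂ) * (c * c) * ((starRingEnd ℂ) (U i j) * U j i) := by
      intro i j
      rw [Complex.star_def, map_mul (starRingEnd ℂ), conj_c]; ring
    simp only [expand, Finset.sum_add_distrib, ← Finset.mul_sum]
    rw [hUU, ← hT, hcc]
    have hd0 : (d : ℂ) ≠ 0 := Nat.cast_ne_zero.mpr hd.ne'
    push_cast
    field_simp
  rw [key, Complex.add_re, Complex.ofReal_re, Complex.re_ofReal_mul]
  try ring

lemma dist2 {d : ℕ} (F G : Fin d → Fin d → ℝ) :
    ∑ i : Fin d, ∑ j : Fin d, (F i j + G i j)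
    = (∑ i : Fin d, ∑ j : Fin d, F i j) + ∑ i : Fin d, ∑ j : Fin d, G i j := by
  rw [← Finset.sum_add_distrib]
  exact Finset.sum_congr rfl fun i _ => Finset.sum_add_distrib

lemma dist2' {d : ℕ} (F G : Fin d → Fin d → ℝ) :
    ∑ i : Fin d, ∑ j : Fin d, (F i j - G i j)
    = (∑ i : Fin d, ∑ j : Fin d, F i j) - ∑ i : Fin d, ∑ j : Fin d, G i j := by
  rw [← Finset.sum_sub_distrib]
  exact Finset.sum_congr rfl fun i _ => Finset.sum_sub_distrib _ _

lemma sum_normSq {d : ℕ} (U : Matrix (Fin d) (Fin d) ℂ)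
    (hU : U ∈ Matrix.unitaryGroup (Fin d) ℂ) :
    ∑ i : Fin d, ∑ j : Fin d, ((U i j).re ^ 2 + (U i j).im ^ 2) = (d : ℝ) := by
  have h1 : star U * U = 1 := Matrix.mem_unitaryGroup_iff'.mp hU
  have h2 := congrArg Matrix.trace h1
  rw [Matrix.trace_one] at h2
  simp only [Matrix.trace, Matrix.diag, Matrix.mul_apply, Matrix.star_apply,
    Complex.star_def] at h2
  have h3 := congrArg Complex.re h2
  simp only [Complex.re_sum, Complex.mul_re, Complex.conj_re, Complex.conj_im,
    Complex.natCast_re, Fintype.card_fin] at h3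
  rw [Finset.sum_comm] at h3
  calc ∑ i : Fin d, ∑ j : Fin d, ((U i j).re ^ 2 + (U i j).im ^ 2)
      = ∑ i : Fin d, ∑ j : Fin d, ((U i j).re * (U i j).re - -(U i j).im * (U i j).im) := by
        exact Finset.sum_congr rfl fun i _ => Finset.sum_congr rfl fun j _ => by ring
    _ = (d : ℝ) := h3

lemma T_re_bound {d : ℕ} (U : Matrix (Fin d) (Fin d) ℂ)
    (hU : U ∈ Matrix.unitaryGroup (Fin d) ℂ) :
    -(d : ℝ) ≤ (∑ i : Fin d, ∑ j : Fin d, (starRingEnd ℂ) (U i j) * U j i).re ∧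
    (∑ i : Fin d, ∑ j : Fin d, (starRingEnd ℂ) (U i j) * U j i).re ≤ (d : ℝ) := by
  have hre : (∑ i : Fin d, ∑ j : Fin d, (starRingEnd ℂ) (U i j) * U j i).re
      = ∑ i : Fin d, ∑ j : Fin d, ((U i j).re * (U j i).re + (U i j).im * (U j i).im) := by
    simp only [Complex.re_sum, Complex.mul_re, Complex.conj_re, Complex.conj_im]
    exact Finset.sum_congr rfl fun i _ => Finset.sum_congr rfl fun j _ => by ring
  have hN := sum_normSq U hU
  have hNs : ∑ i : Fin d, ∑ j : Fin d, ((U j i).re ^ 2 + (U j i).im ^ 2) = (d : ℝ) := by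
    rw [Finset.sum_comm]; exact hN
  have h2 : ∑ i : Fin d, ∑ j : Fin d,
      ((((U i j).re ^ 2 + (U i j).im ^ 2) + ((U j i).re ^ 2 + (U j i).im ^ 2)) / 2)
      = (d : ℝ) := by
    have key : ∀ (F : Fin d → Fin d → ℝ),
        ∑ i : Fin d, ∑ j : Fin d, F i j / 2 = (∑ i : Fin d, ∑ j : Fin d, F i j) / 2 := by
      intro F
      rw [Finset.sum_div]
      exact Finset.sum_congr rfl fun i _ => (Finset.sum_div _ _ _).symm
    rw [key, dist2, hN, hNs]
    ring
  constructor
  · rw [hre]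
    have h0 : (0:ℝ) ≤ ∑ i : Fin d, ∑ j : Fin d,
        (((((U i j).re ^ 2 + (U i j).im ^ 2) + ((U j i).re ^ 2 + (U j i).im ^ 2)) / 2)
          + ((U i j).re * (U j i).re + (U i j).im * (U j i).im)) := by
      apply Finset.sum_nonneg; intro i _; apply Finset.sum_nonneg; intro j _
      nlinarith [sq_nonneg ((U i j).re + (U j i).re), sq_nonneg ((U i j).im + (U j i).im)]
    rw [dist2, h2] at h0
    linarith
  · rw [hre]
    have h0 : (0:ℝ) ≤ ∑ i : Fin d, ∑ j : Fin d,
        (((((U i j).re ^ 2 + (U i j).im ^ 2) + ((U j i).re ^ 2 + (U j i).im ^ 2)) / 2)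
          - ((U i j).re * (U j i).re + (U i j).im * (U j i).im)) := by
      apply Finset.sum_nonneg; intro i _; apply Finset.sum_nonneg; intro j _
      nlinarith [sq_nonneg ((U i j).re - (U j i).re), sq_nonneg ((U i j).im - (U j i).im)]
    rw [dist2', h2] at h0
    linarith

def pp (i : ℕ) : ℕ := if i % 2 = 0 then i + 1 else i - 1

lemma pp_lt {d i : ℕ} (hd : d % 2 = 0) (hi : i < d) : pp i < d := by unfold pp; split <;> omega

lemma pp_pp (i : ℕ) : pp (pp i) = i := by unfold pp; split <;> split <;> omega

def sg (i : ℕ) : ℂ := if i % 2 = 0 then 1 else -1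

lemma sg_pp (i : ℕ) : sg (pp i) = - sg i := by
  unfold sg pp; split <;> split <;> first | omega | ring

lemma conj_sg (i : ℕ) : (starRingEnd ℂ) (sg i) = sg i := by unfold sg; split <;> simp

lemma sg_mul_sg (i : ℕ) : sg i * sg i = 1 := by unfold sg; split <;> ring

def ppF {d : ℕ} (hd : d % 2 = 0) (i : Fin d) : Fin d := ⟨pp i, pp_lt hd i.2⟩

lemma ppF_ppF {d : ℕ} (hd : d % 2 = 0) (i : Fin d) : ppF hd (ppF hd i) = i := by
  simp [ppF, pp_pp]

def JJ {d : ℕ} (hd : d % 2 = 0) : Matrix (Fin d) (Fin d) ℂ :=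
  fun i j => if j = ppF hd i then sg i else 0

lemma JJ_unitary {d : ℕ} (hd : d % 2 = 0) : JJ hd ∈ Matrix.unitaryGroup (Fin d) ℂ := by
  rw [Matrix.mem_unitaryGroup_iff]
  ext i k
  simp only [Matrix.mul_apply, Matrix.star_apply, JJ, Matrix.one_apply]
  simp only [apply_ite (starRingEnd ℂ), map_zero, conj_sg, ite_mul, zero_mul, mul_ite, mul_zero]
  rw [Finset.sum_ite_eq' univ (ppF hd i)]
  simp only [Finset.mem_univ, if_true]
  by_cases h : i = k
  · subst h; simp [conj_sg, sg_mul_sg]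
  · have : ppF hd i ≠ ppF hd k := by
      intro he; apply h
      have := congrArg (ppF hd) he; rwa [ppF_ppF, ppF_ppF] at this
    simp [this, h]

lemma T_one_re {d : ℕ} :
    (∑ i : Fin d, ∑ j : Fin d,
      (starRingEnd ℂ) ((1 : Matrix (Fin d) (Fin d) ℂ) i j)
        * (1 : Matrix (Fin d) (Fin d) ℂ) j i).re = (d : ℝ) := by
  have h : (∑ i : Fin d, ∑ j : Fin d,
      (starRingEnd ℂ) ((1 : Matrix (Fin d) (Fin d) ℂ) i j)
        * (1 : Matrix (Fin d) (Fin d) ℂ) j i) = (d : ℂ) := by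
    simp [Matrix.one_apply, apply_ite (starRingEnd ℂ), ite_mul, mul_ite,
      Finset.sum_ite_eq', eq_comm]
  rw [h]; simp

lemma T_JJ_re {d : ℕ} (hd : d % 2 = 0) :
    (∑ i : Fin d, ∑ j : Fin d,
      (starRingEnd ℂ) (JJ hd i j) * JJ hd j i).re = -(d : ℝ) := by
  have h : (∑ i : Fin d, ∑ j : Fin d, (starRingEnd ℂ) (JJ hd i j) * JJ hd j i)
      = -(d : ℂ) := by
    have hin : ∀ i : Fin d, ∑ j : Fin d, (starRingEnd ℂ) (JJ hd i j) * JJ hd j i = -1 := by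
      intro i
      simp only [JJ, apply_ite (starRingEnd ℂ), map_zero, conj_sg, ite_mul, zero_mul,
        mul_ite, mul_zero]
      have hsw : ∀ x : Fin d,
          (if i = ppF hd x then if x = ppF hd i then sg ↑i * sg ↑x else 0 else 0)
          = if x = ppF hd i then sg ↑i * sg ↑x else 0 := by
        intro x
        by_cases hx : x = ppF hd i
        · subst hx
          simp [ppF_ppF]
        · simp [hx]
      rw [Finset.sum_congr rfl fun x _ => hsw x,
        Finset.sum_ite_eq' Finset.univ (ppF hd i), if_pos (Finset.mem_univ _)]
      show sg ↑i * sg (pp ↑i) = -1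
      rw [sg_pp, mul_neg, sg_mul_sg]
    rw [Finset.sum_congr rfl fun i _ => hin i]
    simp
  rw [h]; simp

/-- FEF of the Werner state for even `d`: `(f+1)/(d(d+1))` for `1/d ≤ f ≤ 1`,
and `(1−f)/(d(d−1))` for `−1 ≤ f < 1/d`. -/
theorem fef_werner_even (d : ℕ) (hd : 2 ≤ d) (heven : Even d) (f : ℝ) :
    (1 / (d : ℝ) ≤ f → f ≤ 1 →
      fef d (werner d f) = (f + 1) / ((d : ℝ) * ((d : ℝ) + 1))) ∧
    (-1 ≤ f → f < 1 / (d : ℝ) →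
      fef d (werner d f) = (1 - f) / ((d : ℝ) * ((d : ℝ) - 1))) := by
  have hdm : d % 2 = 0 := Nat.even_iff.mp heven
  have hd0 : 0 < d := by omega
  have hdR : (2:ℝ) ≤ (d:ℝ) := by exact_mod_cast hd
  have hdpos : (0:ℝ) < (d:ℝ) := by linarith
  have hdne : (d:ℝ) ≠ 0 := ne_of_gt hdpos
  have hD : (0:ℝ) < (d:ℝ)^3 - (d:ℝ) := by
    have h2 : (d:ℝ) * 2 ≤ (d:ℝ) * (d:ℝ) :=
      mul_le_mul_of_nonneg_left hdR hdpos.le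
    have h3 : (d:ℝ) * ((d:ℝ) * 2) ≤ (d:ℝ) * ((d:ℝ) * (d:ℝ)) :=
      mul_le_mul_of_nonneg_left h2 hdpos.le
    nlinarith [h2, h3]
  have hDne : (d:ℝ)^3 - (d:ℝ) ≠ 0 := ne_of_gt hD
  have hp1 : (d:ℝ) + 1 ≠ 0 := by positivity
  have hm1 : (d:ℝ) - 1 ≠ 0 := by intro h; nlinarith
  constructor
  · intro hf1 hf2
    have hb : 0 ≤ ((d:ℝ) * f - 1) / ((d:ℝ)^3 - d) := by
      apply div_nonneg _ hD.le
      have : (d:ℝ) * (1 / d) ≤ (d:ℝ) * f := by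
        apply mul_le_mul_of_nonneg_left hf1 hdpos.le
      rw [mul_one_div, div_self hdne] at this
      linarith
    rw [fef]
    apply IsGreatest.csSup_eq
    constructor
    · refine ⟨1, ?_, ?_⟩
      · rw [Matrix.mem_unitaryGroup_iff]; simp
      · rw [value_eq hd0 f 1 (by rw [Matrix.mem_unitaryGroup_iff]; simp), T_one_re]
        rw [show (d:ℝ)^3 - d = d*((d-1)*(d+1)) by ring]
        field_simp
        ring
    · rintro x ⟨U, hU, rfl⟩
      rw [value_eq hd0 f U hU]
      have hT := (T_re_bound U hU).2
      have hmul : (((d:ℝ) * f - 1) / ((d:ℝ)^3 - d)) * ((1:ℝ)/d)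
            * (∑ i : Fin d, ∑ j : Fin d, (starRingEnd ℂ) (U i j) * U j i).re
          ≤ (((d:ℝ) * f - 1) / ((d:ℝ)^3 - d)) * ((1:ℝ)/d) * (d:ℝ) := by
        apply mul_le_mul_of_nonneg_left hT
        positivity
      have heq : ((d:ℝ) - f) / ((d:ℝ)^3 - d)
            + (((d:ℝ) * f - 1) / ((d:ℝ)^3 - d)) * ((1:ℝ)/d) * (d:ℝ)
          = (f + 1) / ((d:ℝ) * ((d:ℝ) + 1)) := by
        rw [show (d:ℝ)^3 - d = d*((d-1)*(d+1)) by ring]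
        field_simp
        ring
      linarith
  · intro hf1 hf2
    have hb : ((d:ℝ) * f - 1) / ((d:ℝ)^3 - d) ≤ 0 := by
      apply div_nonpos_of_nonpos_of_nonneg _ hD.le
      have : (d:ℝ) * f ≤ (d:ℝ) * (1 / d) := by
        apply mul_le_mul_of_nonneg_left hf2.le hdpos.le
      rw [mul_one_div, div_self hdne] at this
      linarith
    rw [fef]
    apply IsGreatest.csSup_eq
    constructor
    · refine ⟨JJ hdm, JJ_unitary hdm, ?_⟩
      rw [value_eq hd0 f (JJ hdm) (JJ_unitary hdm), T_JJ_re]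
      rw [show (d:ℝ)^3 - d = d*((d-1)*(d+1)) by ring]
      field_simp
      ring
    · rintro x ⟨U, hU, rfl⟩
      rw [value_eq hd0 f U hU]
      have hT := (T_re_bound U hU).1
      have hmul : (((d:ℝ) * f - 1) / ((d:ℝ)^3 - d)) * ((1:ℝ)/d)
            * (∑ i : Fin d, ∑ j : Fin d, (starRingEnd ℂ) (U i j) * U j i).re
          ≤ (((d:ℝ) * f - 1) / ((d:ℝ)^3 - d)) * ((1:ℝ)/d) * (-(d:ℝ)) := by
        apply mul_le_mul_of_nonpos_left hT
        have h1d : (0:ℝ) < (1:ℝ)/d := by positivity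
        nlinarith
      have heq : ((d:ℝ) - f) / ((d:ℝ)^3 - d)
            + (((d:ℝ) * f - 1) / ((d:ℝ)^3 - d)) * ((1:ℝ)/d) * (-(d:ℝ))
          = (1 - f) / ((d:ℝ) * ((d:ℝ) - 1)) := by
        rw [show (d:ℝ)^3 - d = d*((d-1)*(d+1)) by ring]
        field_simp
        ring
      linarith
end
end
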